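/- Let H be a Hilbert space, 𝔹 a closed convex subset of H, F : H → ℝ a convex function, and 𝕏 : H → ℝⁿ a linear operator. Let y ∈ ℝⁿ and let β̂ be a solution of the minimization problem β̂ ∈ argmin_{β ∈ 𝔹} ( ‖𝕏β − y‖_n² + F(β) ). Then for every β ∈ 𝔹 and every f ∈ ℝⁿ, writing ξ = y − f: ‖𝕏β̂ − f‖_n² − ‖𝕏β − f‖_n² ≤ (2/n) ξᵀ(𝕏(β̂ − β)) + F(β) − F(β̂) − ‖𝕏(β̂ − β)‖_n². -/

import Mathlib

open MeasureTheory Real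

noncomputable def empNormSq {n : ℕ} (u : Fin n → ℝ) : ℝ := (∑ i, (u i)^2) / n

/-- Proposition 2: convexity argument.
If `β̂` minimizes `β ↦ ‖𝕏β − y‖_n² + F(β)` over the closed convex set `𝔹`, then for all
`β ∈ 𝔹` and all `f ∈ ℝⁿ`, with `ξ = y − f`,
`‖𝕏β̂ − f‖_n² − ‖𝕏β − f‖_n² ≤ (2/n) ξᵀ(𝕏(β̂ − β)) + F(β) − F(β̂) − ‖𝕏(β̂ − β)‖_n²`. -/
theorem stmt1 {H : Type*} [NormedAddCommGroup H] [InnerProductSpace ℝ H] [CompleteSpace H]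
    {n : ℕ}
    (𝔹 : Set H) (hBconv : Convex ℝ 𝔹) (hBclosed : IsClosed 𝔹)
    (F : H → ℝ) (hF : ConvexOn ℝ Set.univ F)
    (𝕏 : H →ₗ[ℝ] (Fin n → ℝ))
    (y : Fin n → ℝ)
    (βhat : H) (hmem : βhat ∈ 𝔹)
    (hmin : ∀ β ∈ 𝔹, empNormSq (𝕏 βhat - y) + F βhat ≤ empNormSq (𝕏 β - y) + F β) :
    ∀ β ∈ 𝔹, ∀ f : Fin n → ℝ,
      empNormSq (𝕏 βhat - f) - empNormSq (𝕏 β - f) ≤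
        (2 / n) * (∑ i, (y - f) i * 𝕏 (βhat - β) i) + F β - F βhat
          - empNormSq (𝕏 (βhat - β)) := by
  intro β hβ f
  set A : ℝ := ∑ i, (𝕏 βhat i - y i)^2 with hA
  set S : ℝ := ∑ i, (𝕏 βhat i - y i) * (𝕏 β i - 𝕏 βhat i) with hS
  set Q : ℝ := ∑ i, (𝕏 β i - 𝕏 βhat i)^2 with hQ
  clear_value A S Q
  have hQn : 0 ≤ Q / n := by
    rw [hQ]
    exact div_nonneg (Finset.sum_nonneg fun i _ => sq_nonneg _) (Nat.cast_nonneg n)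
  -- inequality along the segment, for every t ∈ (0,1]
  have htineq : ∀ t : ℝ, 0 < t → t ≤ 1 →
      0 ≤ 2 * S / n + t * (Q / n) + (F β - F βhat) := by
    intro t ht0 ht1
    have hγ : (1 - t) • βhat + t • β ∈ 𝔹 :=
      hBconv hmem hβ (by linarith) (le_of_lt ht0) (by ring)
    have hmin' := hmin _ hγ
    have hFγ : F ((1 - t) • βhat + t • β) ≤ (1 - t) * F βhat + t * F β :=
      hF.2 (Set.mem_univ βhat) (Set.mem_univ β) (by linarith) (le_of_lt ht0) (by ring)
    have hmap : ∀ i, 𝕏 ((1 - t) • βhat + t • β) i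
        = (1 - t) * 𝕏 βhat i + t * 𝕏 β i := by
      intro i
      have : 𝕏 ((1 - t) • βhat + t • β) = (1 - t) • 𝕏 βhat + t • 𝕏 β := by
        rw [map_add, LinearMap.map_smul, LinearMap.map_smul]
      rw [this]
      simp [Pi.add_apply, Pi.smul_apply, smul_eq_mul]
    have hexp : ∑ i, ((𝕏 ((1 - t) • βhat + t • β) - y) i)^2
        = A + 2 * t * S + t^2 * Q := by
      have hpt : ∀ i, ((𝕏 ((1 - t) • βhat + t • β) - y) i)^2
          = (𝕏 βhat i - y i)^2
            + (2 * t) * ((𝕏 βhat i - y i) * (𝕏 β i - 𝕏 βhat i))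
            + t^2 * (𝕏 β i - 𝕏 βhat i)^2 := by
        intro i
        simp only [Pi.sub_apply, hmap i]
        ring
      rw [Finset.sum_congr rfl fun i _ => hpt i, Finset.sum_add_distrib,
        Finset.sum_add_distrib, ← Finset.mul_sum, ← Finset.mul_sum, ← hA, ← hS, ← hQ]
    have h1 : A / n + F βhat
        ≤ (A + 2 * t * S + t^2 * Q) / n + ((1 - t) * F βhat + t * F β) := by
      calc A / n + F βhat ≤ empNormSq (𝕏 ((1 - t) • βhat + t • β) - y)
            + F ((1 - t) • βhat + t • β) := by
              have h0 : empNormSq (𝕏 βhat - y) = A / n := by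
                simp [empNormSq, hA.symm, Pi.sub_apply]
              rw [← h0]; exact hmin'
        _ ≤ (A + 2 * t * S + t^2 * Q) / n + ((1 - t) * F βhat + t * F β) := by
              have h0 : empNormSq (𝕏 ((1 - t) • βhat + t • β) - y)
                  = (A + 2 * t * S + t^2 * Q) / n := by
                simp only [empNormSq, hexp]
              rw [h0]; exact add_le_add_right hFγ _
    have h2 : 0 ≤ t * (2 * S / n + t * (Q / n) + (F β - F βhat)) := by
      have h3 : (A + 2 * t * S + t^2 * Q) / n = A / n + 2 * t * S / n + t^2 * Q / n := by
        rw [add_div, add_div]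
      rw [h3] at h1
      have h4 : 2 * t * S / (n : ℝ) = t * (2 * S / n) := by ring
      have h5 : t^2 * Q / (n : ℝ) = t * (t * (Q / n)) := by ring
      rw [h4, h5] at h1
      nlinarith [h1]
    nlinarith [h2, ht0]
  -- take the limit t → 0⁺ : the first-order optimality condition
  have key : 0 ≤ 2 * S / n + (F β - F βhat) := by
    by_contra h
    push_neg at h
    set c : ℝ := 2 * S / n + (F β - F βhat) with hc
    clear_value c
    have hcneg : c < 0 := h
    have hQn1 : 0 < Q / n + 1 := by linarith
    have hpos : 0 < (-c) / (Q / n + 1) := div_pos (by linarith) hQn1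
    set t : ℝ := min 1 ((-c) / (Q / n + 1)) with ht
    clear_value t
    have ht0 : 0 < t := ht ▸ lt_min one_pos hpos
    have ht1 : t ≤ 1 := ht ▸ min_le_left _ _
    have htle : t ≤ (-c) / (Q / n + 1) := ht ▸ min_le_right _ _
    have hlt : t * (Q / n) < -c := by
      calc t * (Q / n) ≤ ((-c) / (Q / n + 1)) * (Q / n) :=
            mul_le_mul_of_nonneg_right htle hQn
        _ < -c := by
            rw [div_mul_eq_mul_div, div_lt_iff₀ hQn1, mul_add, mul_one]
            linarith [neg_pos.mpr hcneg]
    linarith [htineq t ht0 ht1, hc]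
  -- algebraic identity for the sums
  have hsum : ∑ i, (𝕏 βhat i - f i)^2
      = ∑ i, (𝕏 β i - f i)^2
        + (2 * (∑ i, (y i - f i) * (𝕏 βhat i - 𝕏 β i)) - 2 * S
            - ∑ i, (𝕏 βhat i - 𝕏 β i)^2) := by
    have hpt : ∀ i, (𝕏 βhat i - f i)^2
        = (𝕏 β i - f i)^2
          + (2 * ((y i - f i) * (𝕏 βhat i - 𝕏 β i))
            - 2 * ((𝕏 βhat i - y i) * (𝕏 β i - 𝕏 βhat i))
            - (𝕏 βhat i - 𝕏 β i)^2) := by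
      intro i; ring
    rw [Finset.sum_congr rfl fun i _ => hpt i, Finset.sum_add_distrib]
    congr 1
    rw [Finset.sum_sub_distrib, Finset.sum_sub_distrib, ← Finset.mul_sum, ← Finset.mul_sum,
      ← hS]
  -- conclude
  simp only [empNormSq, map_sub, Pi.sub_apply]
  have hsd : (∑ i, (𝕏 βhat i - f i)^2) / (n : ℝ)
      = (∑ i, (𝕏 β i - f i)^2) / n
        + 2 / n * (∑ i, (y i - f i) * (𝕏 βhat i - 𝕏 β i))
        - 2 * S / n - (∑ i, (𝕏 βhat i - 𝕏 β i)^2) / n := by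
    rw [hsum]; ring
  linarith [hsd, key]
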